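/- Let b be an odd prime, a, n integers, and t > 1 an odd integer coprime to b. Then K(a,b,t;n) = ∑_{h=1}^{b-1} (ω_{h,b}/ω_{th,b}^t) e^{2πi(at-n)h/b} equals 𝕀(a,b,t,n)·(-1)^{(1-t)(b-1)/4}·(t/b), where 𝕀(a,b,t,n) = b-1 if (1/24)(1-t²)(1-b²) + at - n ≡ 0 (mod b) and -1 otherwise. -/

import Mathlib

open Complex Real

open scoped Classical in
/-- The sawtooth function `((x))`. -/
noncomputable def saw (x : ℝ) : ℝ :=
  if (⌊x⌋ : ℝ) = x then 0 else x - ⌊x⌋ - 1 / 2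

/-- The Dedekind sum `s(h,k) = ∑_{μ mod k} ((μ/k))((hμ/k))`. -/
noncomputable def dedekindSum (h : ℤ) (k : ℕ) : ℝ :=
  ∑ μ ∈ Finset.range k, saw ((μ : ℝ) / k) * saw ((h : ℝ) * μ / k)

open Finset

lemma saw_zero : saw 0 = 0 := by simp [saw]

/-- If `c = b*q + r` with `0 < r < b` then `saw (c/b) = r/b - 1/2`. -/
lemma saw_eval (b : ℕ) (c q r : ℤ) (hc : c = b * q + r) (h0 : 0 < r) (hrb : r < (b:ℤ)) :
    saw ((c : ℝ) / b) = (r : ℝ) / b - 1 / 2 := by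
  have hb0 : (0:ℤ) < b := lt_trans h0 hrb
  have hbR : (0:ℝ) < (b:ℝ) := by exact_mod_cast hb0
  have hx : (c : ℝ) / b = (q : ℝ) + (r : ℝ) / b := by
    rw [hc]; push_cast; field_simp
  have hr0 : (0:ℝ) < (r:ℝ)/b := by positivity
  have hr1 : (r:ℝ)/b < 1 := by
    rw [div_lt_one hbR]; exact_mod_cast hrb
  have hfl : ⌊(c:ℝ)/b⌋ = q := by
    rw [hx, add_comm, Int.floor_add_intCast, Int.floor_eq_zero_iff.2 ⟨le_of_lt hr0, hr1⟩, zero_add]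
  have hne : ((⌊(c:ℝ)/b⌋ : ℤ) : ℝ) ≠ (c:ℝ)/b := by
    rw [hfl, hx]
    intro h
    nlinarith [h]
  rw [saw, if_neg hne, hfl, hx]
  ring


open Finset

section
variable {b : ℕ} [hb : Fact b.Prime]

/-- `U(c) = ∑_{μ=1}^{b-1} μ * ((c*μ) mod b)`. -/
def Uval (c : ZMod b) : ℕ := ∑ μ ∈ Finset.Icc 1 (b-1), μ * (c * (μ:ZMod b)).val

lemma mem_Icc_ne_zero {μ : ℕ} (hμ : μ ∈ Finset.Icc 1 (b-1)) : ((μ : ZMod b)) ≠ 0 := by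
  have h1 := (Finset.mem_Icc.1 hμ).1
  have h2 := (Finset.mem_Icc.1 hμ).2
  have hbpos : 0 < b := hb.out.pos
  have hlt : μ < b := lt_of_le_of_lt h2 (Nat.sub_lt hbpos one_pos)
  have : ((μ:ZMod b)).val = μ := ZMod.val_cast_of_lt hlt
  intro h
  rw [h] at this
  simp [ZMod.val_zero] at this
  omega

lemma val_mem_Icc {c : ZMod b} (hc : c ≠ 0) {μ : ℕ} (hμ : μ ∈ Finset.Icc 1 (b-1)) :
    (c * (μ:ZMod b)).val ∈ Finset.Icc 1 (b-1) := by
  have : c * (μ:ZMod b) ≠ 0 := mul_ne_zero hc (mem_Icc_ne_zero hμ)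
  have hv : (c * (μ:ZMod b)).val ≠ 0 := by
    intro h; exact this (by rwa [← ZMod.val_eq_zero])
  have hlt : (c * (μ:ZMod b)).val < b := ZMod.val_lt _
  exact Finset.mem_Icc.2 ⟨Nat.one_le_iff_ne_zero.2 hv, by omega⟩

/-- permutation of residues: summing `f` over `(c*μ).val` equals summing `f`. -/
lemma sum_perm {M : Type*} [AddCommMonoid M] {c : ZMod b} (hc : c ≠ 0) (f : ℕ → M) :
    ∑ μ ∈ Finset.Icc 1 (b-1), f ((c * (μ:ZMod b)).val) = ∑ μ ∈ Finset.Icc 1 (b-1), f μ := by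
  haveI : NeZero b := ⟨hb.out.ne_zero⟩
  refine Finset.sum_nbij' (fun μ => (c * (μ:ZMod b)).val) (fun ν => (c⁻¹ * (ν:ZMod b)).val)
    (fun μ hμ => val_mem_Icc hc hμ) (fun ν hν => val_mem_Icc (inv_ne_zero hc) hν)
    ?_ ?_ (fun μ _ => rfl)
  · intro μ hμ
    show (c⁻¹ * (((c * (μ:ZMod b)).val : ℕ) : ZMod b)).val = μ
    rw [ZMod.natCast_val, ZMod.cast_id, ← mul_assoc, inv_mul_cancel₀ hc, one_mul]
    exact ZMod.val_cast_of_lt (by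
      have h2 := (Finset.mem_Icc.1 hμ).2
      have hbpos : 0 < b := hb.out.pos
      omega)
  · intro ν hν
    show (c * (((c⁻¹ * (ν:ZMod b)).val : ℕ) : ZMod b)).val = ν
    rw [ZMod.natCast_val, ZMod.cast_id, ← mul_assoc, mul_inv_cancel₀ hc, one_mul]
    exact ZMod.val_cast_of_lt (by
      have h2 := (Finset.mem_Icc.1 hν).2
      have hbpos : 0 < b := hb.out.pos
      omega)

end

section
variable {b : ℕ} [hb : Fact b.Prime]

lemma sum_Icc_id_real : (∑ μ ∈ Finset.Icc 1 (b-1), (μ:ℝ)) = (b:ℝ) * ((b:ℝ)-1) / 2 := by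
  have hbpos : 0 < b := hb.out.pos
  have hsucc : (b-1)+1 = b := by omega
  have h1 : Finset.Icc 1 (b-1) = Finset.Ico 1 b := by
    rw [← Finset.Ico_add_one_right_eq_Icc]; congr 1
  have h2 : (∑ μ ∈ Finset.range b, μ) * 2 = b * (b-1) := Finset.sum_range_id_mul_two b
  have h3 : (∑ μ ∈ Finset.range b, μ) = ∑ μ ∈ Finset.Icc 1 (b-1), μ := by
    rw [h1, Finset.range_eq_Ico, Finset.sum_eq_sum_Ico_succ_bot hbpos]
    simp
  have h4 : (∑ μ ∈ Finset.Icc 1 (b-1), μ) * 2 = b * (b - 1) := by rw [← h3]; exact h2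
  have := congrArg (fun n : ℕ => (n : ℝ)) h4
  push_cast [Nat.cast_sub (Nat.one_le_iff_ne_zero.2 hbpos.ne')] at this
  push_cast
  linarith

lemma dedekindSum_eq (C : ℤ) (hC : ((C : ZMod b)) ≠ 0) :
    dedekindSum C b
      = (Uval ((C:ZMod b)) : ℝ)/(b:ℝ)^2 - ((b:ℝ)-1)/4 := by
  haveI : NeZero b := ⟨hb.out.ne_zero⟩
  have hbpos : 0 < b := hb.out.pos
  have hsucc : (b-1)+1 = b := by omega
  have hbR : (0:ℝ) < b := by exact_mod_cast hbpos
  have hsplit : dedekindSum C b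
      = ∑ μ ∈ Finset.Icc 1 (b-1), saw ((μ : ℝ) / b) * saw ((C : ℝ) * μ / b) := by
    have h1 : Finset.Icc 1 (b-1) = Finset.Ico 1 b := by
      rw [← Finset.Ico_add_one_right_eq_Icc]; congr 1
    rw [dedekindSum, Finset.range_eq_Ico, Finset.sum_eq_sum_Ico_succ_bot hbpos, h1]
    norm_num [saw_zero]
  rw [hsplit]
  have key : ∀ μ ∈ Finset.Icc 1 (b-1),
      saw ((μ : ℝ) / b) * saw ((C : ℝ) * μ / b)
        = (μ:ℝ) * ((((C:ZMod b)) * (μ:ZMod b)).val :ℝ) / (b:ℝ)^2 - (μ:ℝ)/(2*b)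
            - ((((C:ZMod b)) * (μ:ZMod b)).val :ℝ)/(2*b) + 1/4 := by
    intro μ hμ
    have hμ1 := (Finset.mem_Icc.1 hμ).1
    have hμ2 := (Finset.mem_Icc.1 hμ).2
    have hμb : μ < b := by omega
    have hrmem := val_mem_Icc hC hμ
    have hr1 : 1 ≤ (((C:ZMod b)) * (μ:ZMod b)).val := (Finset.mem_Icc.1 hrmem).1
    have hr2 : (((C:ZMod b)) * (μ:ZMod b)).val ≤ b - 1 := (Finset.mem_Icc.1 hrmem).2
    have e1 : saw ((μ : ℝ) / b) = (μ:ℝ)/b - 1/2 := by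
      have := saw_eval b μ 0 μ (by push_cast; ring) (by exact_mod_cast hμ1) (by exact_mod_cast hμb)
      push_cast at this ⊢
      convert this using 2
    have hdvd : (b:ℤ) ∣ C * μ - ((((C:ZMod b)) * (μ:ZMod b)).val : ℤ) := by
      have : (((C * μ - ((((C:ZMod b)) * (μ:ZMod b)).val : ℤ)) : ℤ) : ZMod b) = 0 := by
        push_cast
        rw [ZMod.natCast_val, ZMod.cast_id]
        ring
      exact (ZMod.intCast_zmod_eq_zero_iff_dvd _ b).1 this
    obtain ⟨q, hq⟩ := hdvd
    have e2 : saw ((C : ℝ) * μ / b)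
        = ((((C:ZMod b)) * (μ:ZMod b)).val :ℝ)/b - 1/2 := by
      have hc : (C * μ : ℤ) = (b:ℤ) * q + ((((C:ZMod b)) * (μ:ZMod b)).val : ℤ) := by omega
      have := saw_eval b (C*μ) q ((((C:ZMod b)) * (μ:ZMod b)).val) hc
        (by exact_mod_cast hr1) (by exact_mod_cast (show (((C:ZMod b)) * (μ:ZMod b)).val < b by omega))
      push_cast at this ⊢
      convert this using 2
    rw [e1, e2]
    field_simp
    ring
  rw [Finset.sum_congr rfl key]
  have hU : (Uval ((C:ZMod b)) : ℝ)
      = ∑ μ ∈ Finset.Icc 1 (b-1), (μ:ℝ) * ((((C:ZMod b)) * (μ:ZMod b)).val :ℝ) := by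
    rw [Uval]
    push_cast
    rfl
  have hperm : (∑ μ ∈ Finset.Icc 1 (b-1), ((((C:ZMod b)) * (μ:ZMod b)).val :ℝ))
      = ∑ μ ∈ Finset.Icc 1 (b-1), (μ:ℝ) :=
    sum_perm hC (fun ν => (ν:ℝ))
  have hcard : ((Finset.Icc 1 (b-1)).card : ℝ) = (b:ℝ) - 1 := by
    rw [Nat.card_Icc]
    push_cast [Nat.cast_sub (Nat.one_le_iff_ne_zero.2 hbpos.ne')]
    ring
  rw [Finset.sum_add_distrib, Finset.sum_sub_distrib, Finset.sum_sub_distrib,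
    Finset.sum_const, nsmul_eq_mul, hcard, ← Finset.sum_div, ← Finset.sum_div,
    ← Finset.sum_div, hperm, ← hU, sum_Icc_id_real]
  field_simp
  ring
/-- sum of squares -/
def S2n (b : ℕ) : ℕ := ∑ μ ∈ Finset.Icc 1 (b-1), μ * μ

lemma six_sq_sum : ∀ n : ℕ, 6 * (∑ μ ∈ Finset.range n, (μ:ℤ)^2) = n*((n:ℤ)-1)*(2*n-1) := by
  intro n
  induction n with
  | zero => simp
  | succ k ih =>
    rw [Finset.sum_range_succ, mul_add, ih]
    push_cast
    ring

lemma six_S2n : 6 * (S2n b : ℤ) = b*((b:ℤ)-1)*(2*b-1) := by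
  have hbpos : 0 < b := hb.out.pos
  have h1 : Finset.Icc 1 (b-1) = Finset.Ico 1 b := by
    rw [← Finset.Ico_add_one_right_eq_Icc]; congr 1; omega
  have h2 : (S2n b : ℤ) = ∑ μ ∈ Finset.range b, (μ:ℤ)^2 := by
    rw [S2n, h1, Finset.range_eq_Ico, Finset.sum_eq_sum_Ico_succ_bot hbpos]
    push_cast
    simp [sq]
  rw [h2, six_sq_sum]

lemma val_sub_dvd (C : ℤ) (μ : ℕ) : (b:ℤ) ∣ ((((C:ZMod b)) * (μ:ZMod b)).val : ℤ) - C * μ := by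
  haveI : NeZero b := ⟨hb.out.ne_zero⟩
  have : ((((((C:ZMod b)) * (μ:ZMod b)).val : ℤ) - C * μ : ℤ) : ZMod b) = 0 := by
    push_cast
    rw [ZMod.natCast_val, ZMod.cast_id]
    ring
  exact (ZMod.intCast_zmod_eq_zero_iff_dvd _ b).1 this

/-- Key congruence: `2·C·U(C) ≡ (1+C²)·S2  (mod b²)`. -/
lemma key_cong (C : ℤ) (hC : ((C : ZMod b)) ≠ 0) :
    (2*C*(Uval ((C:ZMod b))) : ℤ) ≡ (1 + C^2) * (S2n b) [ZMOD ((b:ℤ)^2)] := by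
  rw [Int.modEq_iff_dvd]
  have hU : ((Uval ((C:ZMod b)) : ℤ))
      = ∑ μ ∈ Finset.Icc 1 (b-1), (μ:ℤ) * ((((C:ZMod b)) * (μ:ZMod b)).val : ℤ) := by
    rw [Uval]; push_cast; rfl
  have hS2 : ((S2n b : ℤ)) = ∑ μ ∈ Finset.Icc 1 (b-1), (μ:ℤ)^2 := by
    rw [S2n]; push_cast; simp [sq]
  have hS2' : ((S2n b : ℤ))
      = ∑ μ ∈ Finset.Icc 1 (b-1), ((((C:ZMod b)) * (μ:ZMod b)).val : ℤ)^2 := by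
    rw [hS2, ← sum_perm hC (fun ν => (ν:ℤ)^2)]
  have hexp : (1 + C^2) * (S2n b) - 2*C*(Uval ((C:ZMod b)) : ℤ)
      = ∑ μ ∈ Finset.Icc 1 (b-1),
          (((((C:ZMod b)) * (μ:ZMod b)).val : ℤ) - C * μ)^2 := by
    calc (1 + C^2) * (S2n b) - 2*C*(Uval ((C:ZMod b)) : ℤ)
        = (S2n b : ℤ) + C^2 * (S2n b) - 2*C*(Uval ((C:ZMod b)) : ℤ) := by ring
      _ = ∑ μ ∈ Finset.Icc 1 (b-1),
            (((((C:ZMod b)) * (μ:ZMod b)).val : ℤ)^2 + C^2 * (μ:ℤ)^2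
              - 2*C*((μ:ℤ) * ((((C:ZMod b)) * (μ:ZMod b)).val : ℤ))) := by
          rw [Finset.sum_sub_distrib, Finset.sum_add_distrib, ← hS2', ← Finset.mul_sum, ← hS2,
            ← Finset.mul_sum, ← hU]
      _ = _ := by
          apply Finset.sum_congr rfl
          intro μ _
          ring
  rw [hexp]
  apply Finset.dvd_sum
  intro μ _
  have := val_sub_dvd (b := b) C μ
  obtain ⟨k, hk⟩ := this
  rw [hk]
  exact ⟨k^2, by ring⟩


lemma dvd24 {t : ℕ} (htodd : Odd t) (hbodd : Odd b) (h3 : ¬((3:ℤ) ∣ t ∧ (3:ℤ) ∣ b)) :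
    (24:ℤ) ∣ (1 - (t:ℤ)^2) * (1 - (b:ℤ)^2) := by
  have h8 : (8:ℤ) ∣ (1 - (t:ℤ)^2) := by
    obtain ⟨k, hk⟩ := htodd
    have h2 : (t:ℤ) = 2*k+1 := by exact_mod_cast hk
    have : Even ((k:ℤ) * (k+1)) := Int.even_mul_succ_self k
    obtain ⟨j, hj⟩ := this
    exact ⟨-j, by rw [h2]; nlinarith [hj]⟩
  have h3' : (3:ℤ) ∣ (1 - (t:ℤ)^2) * (1 - (b:ℤ)^2) := by
    have key : ∀ x : ZMod 3, x ≠ 0 → x^2 = 1 := by decide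
    have : (((1 - (t:ℤ)^2) * (1 - (b:ℤ)^2) : ℤ) : ZMod 3) = 0 := by
      push_cast
      by_cases ht : ((t:ℤ) : ZMod 3) = 0
      · by_cases hb3 : ((b:ℤ) : ZMod 3) = 0
        · exfalso
          exact h3 ⟨by exact_mod_cast (ZMod.intCast_zmod_eq_zero_iff_dvd (t:ℤ) 3).1 ht,
              by exact_mod_cast (ZMod.intCast_zmod_eq_zero_iff_dvd (b:ℤ) 3).1 hb3⟩
        · push_cast at hb3 ⊢
          rw [key _ hb3]
          ring
      · push_cast at ht ⊢
        rw [key _ ht]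
        ring
    exact_mod_cast (ZMod.intCast_zmod_eq_zero_iff_dvd _ 3).1 this
  have hco : IsCoprime (8:ℤ) 3 := by
    rw [Int.isCoprime_iff_gcd_eq_one]
    decide
  have := hco.mul_dvd (dvd_mul_of_dvd_left h8 _) h3'
  exact this

/-- `b² ∣ (1-t²)·S2 - 4·b·m` where `24m = (1-t²)(1-b²)`. -/
lemma D_dvd {t : ℕ} {m : ℤ} (hm : 24 * m = (1 - (t:ℤ)^2) * (1 - (b:ℤ)^2)) (hbodd : Odd b)
    (htodd : Odd t) :
    ((b:ℤ))^2 ∣ (1 - (t:ℤ)^2) * (S2n b) - 4*b*m := by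
  have h6 := six_S2n (b := b)
  have h12 : 12 * ((1 - (t:ℤ)^2) * (S2n b) - 4*b*m)
      = 6 * ((b:ℤ)^2 * ((1 - (t:ℤ)^2) * ((b:ℤ)-1))) := by
    have : 12 * ((1 - (t:ℤ)^2) * (S2n b) - 4*b*m)
        = 2 * (1 - (t:ℤ)^2) * (6 * (S2n b)) - 2*(b:ℤ)*(24*m) := by ring
    rw [this, h6, hm]
    ring
  have h2 : 2 * ((1 - (t:ℤ)^2) * (S2n b) - 4*b*m) = (b:ℤ)^2 * ((1 - (t:ℤ)^2) * ((b:ℤ)-1)) := by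
    linarith
  have heven : Even ((1 - (t:ℤ)^2) * ((b:ℤ)-1)) := by
    apply Even.mul_left
    obtain ⟨k, hk⟩ := hbodd
    have : (b:ℤ) = 2*k+1 := by exact_mod_cast hk
    exact ⟨k, by omega⟩
  obtain ⟨k, hk⟩ := heven
  refine ⟨k, ?_⟩
  have h2' : 2 * ((1 - (t:ℤ)^2) * (S2n b) - 4*b*m) = 2 * ((b:ℤ)^2 * k) := by
    rw [h2, hk]; ring
  exact mul_left_cancel₀ two_ne_zero h2'

/-- The main mod-b² congruence for `V = U₁ - t·U₂`. -/
lemma V_modsq {t h : ℕ} {m : ℤ} (hm : 24 * m = (1 - (t:ℤ)^2) * (1 - (b:ℤ)^2))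
    (hbodd : Odd b) (htodd : Odd t)
    (htb : ((t:ℤ) : ZMod b) ≠ 0) (hhb : (((h:ℕ):ℤ) : ZMod b) ≠ 0) :
    ((Uval (((h:ℤ) : ZMod b)) : ℤ) - t * (Uval ((((t*h : ℕ):ℤ) : ZMod b)))
      ≡ 2*b*m*h [ZMOD ((b:ℤ)^2)]) := by
  have hthb : ((((t*h : ℕ):ℤ)) : ZMod b) ≠ 0 := by
    push_cast
    push_cast at htb hhb
    exact mul_ne_zero htb hhb
  have A1 := key_cong (b := b) (h:ℤ) hhb
  have A2 := key_cong (b := b) ((t*h : ℕ):ℤ) hthb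
  set U1 := (Uval (((h:ℤ) : ZMod b)) : ℤ)
  set U2 := (Uval ((((t*h : ℕ):ℤ) : ZMod b)) : ℤ)
  -- 2th·V ≡ t(1+h²)S2 - t(1+(th)²)S2 = t·h²·(1-t²)·S2
  have hA : (2*(t:ℤ)*h) * (U1 - t*U2) ≡ (t:ℤ) * ((h:ℤ)^2) * ((1 - (t:ℤ)^2) * (S2n b))
      [ZMOD ((b:ℤ)^2)] := by
    have e1 : (2*(t:ℤ)*h) * (U1 - t*U2)
        = (t:ℤ) * (2*(h:ℤ)*U1) - t * (2*((t*h : ℕ):ℤ)*U2) := by push_cast; ring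
    have e2 : (t:ℤ) * ((1 + (h:ℤ)^2) * (S2n b)) - t * ((1 + (((t*h : ℕ):ℤ))^2) * (S2n b))
        = (t:ℤ) * ((h:ℤ)^2) * ((1 - (t:ℤ)^2) * (S2n b)) := by push_cast; ring
    rw [e1, ← e2]
    exact (A1.mul_left _).sub (A2.mul_left _)
  have hD := D_dvd (b := b) hm hbodd htodd
  have hB : (t:ℤ) * ((h:ℤ)^2) * ((1 - (t:ℤ)^2) * (S2n b))
      ≡ (t:ℤ) * ((h:ℤ)^2) * (4*b*m) [ZMOD ((b:ℤ)^2)] := by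
    apply Int.ModEq.mul_left
    rw [Int.modEq_iff_dvd]
    have : (4*(b:ℤ)*m) - (1 - (t:ℤ)^2) * (S2n b) = -((1 - (t:ℤ)^2) * (S2n b) - 4*b*m) := by ring
    rw [this]
    exact dvd_neg.mpr hD
  have hfin : (2*(t:ℤ)*h) * (U1 - t*U2) ≡ (2*(t:ℤ)*h) * (2*b*m*h) [ZMOD ((b:ℤ)^2)] := by
    refine hA.trans ?_
    have : (t:ℤ) * ((h:ℤ)^2) * (4*b*m) = (2*(t:ℤ)*h) * (2*b*m*h) := by ring
    rw [← this]
    exact hB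
  -- cancel 2th
  have hnot : ∀ x : ℕ, (((x:ℤ)) : ZMod b) ≠ 0 → Nat.Coprime b x := by
    intro x hx
    refine (Nat.Prime.coprime_iff_not_dvd hb.out).2 ?_
    intro hdvd
    exact hx ((ZMod.intCast_zmod_eq_zero_iff_dvd _ b).2 (by exact_mod_cast hdvd))
  have hb2 : Nat.Coprime b 2 := Nat.coprime_two_right.2 hbodd
  have hbt : Nat.Coprime b t := hnot t htb
  have hbh : Nat.Coprime b h := hnot h hhb
  have hcopr : Nat.Coprime (b^2) (2*t*h) :=
    Nat.Coprime.pow_left 2 ((hb2.mul_right hbt).mul_right hbh)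
  have hgcd : Int.gcd ((b:ℤ)^2) (2*(t:ℤ)*(h:ℤ)) = 1 := by
    have : ((b:ℤ)^2) = ((b^2 : ℕ) : ℤ) := by push_cast; ring
    have h2 : (2*(t:ℤ)*(h:ℤ)) = ((2*t*h : ℕ) : ℤ) := by push_cast; ring
    rw [this, h2, Int.gcd_natCast_natCast]
    exact hcopr
  have hfin' : (U1 - t*U2) * (2*(t:ℤ)*h) ≡ (2*b*m*h) * (2*(t:ℤ)*h) [ZMOD ((b:ℤ)^2)] := by
    calc (U1 - t*U2) * (2*(t:ℤ)*h) = (2*(t:ℤ)*h) * (U1 - t*U2) := by ring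
      _ ≡ (2*(t:ℤ)*h) * (2*b*m*h) [ZMOD ((b:ℤ)^2)] := hfin
      _ = (2*b*m*h) * (2*(t:ℤ)*h) := by ring
  have hbsq : (0:ℤ) < (b:ℤ)^2 := by
    have := hb.out.pos
    positivity
  have := Int.ModEq.cancel_right_div_gcd hbsq hfin'
  rwa [hgcd, Nat.cast_one, Int.ediv_one] at this

/-- Gauss-lemma count. -/
def Ncount (b : ℕ) [Fact b.Prime] (C : ℤ) : ℕ :=
  #(Finset.filter (fun x : ℕ => b / 2 < (((C : ZMod b)) * (x : ZMod b)).val)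
      (Finset.Ico 1 (b/2).succ))

lemma zmod2_helper : ∀ x y : ZMod 2, (1-x)*(1-y) = 1 + x + y - x*y := by decide

lemma U_parity (hb2 : b ≠ 2) (C : ℤ) (hC : ((C : ZMod b)) ≠ 0) :
    ((Uval ((C:ZMod b)) : ZMod 2)) = ((b/2 : ℕ) : ZMod 2) + ((Ncount b C : ℕ) : ZMod 2) := by
  haveI : NeZero b := ⟨hb.out.ne_zero⟩
  have hbodd : Odd b := hb.out.odd_of_ne_two hb2
  obtain ⟨m', hm'⟩ := hbodd
  have hm2 : b / 2 = m' := by omega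
  have h20 : ((2:ℕ) : ZMod 2) = 0 := rfl
  have hb1 : (b : ZMod 2) = 1 := by
    have h : ((b:ℕ) : ZMod 2) = ((2*m'+1 : ℕ) : ZMod 2) := by rw [← hm']
    rw [h]
    push_cast
    rw [show ((2:ZMod 2)) = 0 from rfl]
    ring
  set c : ZMod b := ((C : ZMod b)) with hc
  set r : ℕ → ℕ := fun ν => (c * (ν : ZMod b)).val with hrdef
  -- cast the sum
  have hUcast : ((Uval c : ZMod 2)) = ∑ ν ∈ Finset.Icc 1 (b-1), ((ν * r ν : ℕ) : ZMod 2) := by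
    rw [Uval, Nat.cast_sum]
  -- split
  have hIcc : Finset.Icc 1 (b-1) = Finset.Ico 1 b := by
    rw [← Finset.Ico_add_one_right_eq_Icc]; congr 1; omega
  have hsplit : ∑ ν ∈ Finset.Icc 1 (b-1), ((ν * r ν : ℕ) : ZMod 2)
      = (∑ ν ∈ Finset.Ico 1 (m'+1), ((ν * r ν : ℕ) : ZMod 2))
        + ∑ ν ∈ Finset.Ico (m'+1) b, ((ν * r ν : ℕ) : ZMod 2) := by
    rw [hIcc, ← Finset.sum_Ico_consecutive _ (by omega : 1 ≤ m'+1) (by omega : m'+1 ≤ b)]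
  -- reflect the upper half
  have hrb : ∀ ν : ℕ, 1 ≤ ν → ν ≤ b - 1 → r (b - ν) = b - r ν := by
    intro ν h1 h2
    have hνb : ν < b := by omega
    have hν0 : ((ν : ZMod b)) ≠ 0 := by
      intro h
      have := ZMod.val_cast_of_lt hνb
      rw [h, ZMod.val_zero] at this
      omega
    have hcast : ((b - ν : ℕ) : ZMod b) = - (ν : ZMod b) := by
      rw [Nat.cast_sub (le_of_lt hνb), ZMod.natCast_self, zero_sub]
    have hne : c * (ν : ZMod b) ≠ 0 := mul_ne_zero hC hν0
    rw [hrdef]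
    simp only [hcast, mul_neg]
    rw [ZMod.neg_val, if_neg hne]
  have hrefl : ∑ ν ∈ Finset.Ico (m'+1) b, ((ν * r ν : ℕ) : ZMod 2)
      = ∑ ν ∈ Finset.Ico 1 (m'+1), (((b - ν) * r (b - ν) : ℕ) : ZMod 2) := by
    refine Finset.sum_nbij' (fun ν => b - ν) (fun ν => b - ν) ?_ ?_ ?_ ?_ ?_
    · intro ν hν
      simp only [Finset.mem_Ico] at hν ⊢
      omega
    · intro ν hν
      simp only [Finset.mem_Ico] at hν ⊢
      omega
    · intro ν hν
      simp only [Finset.mem_Ico] at hν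
      show b - (b - ν) = ν
      omega
    · intro ν hν
      simp only [Finset.mem_Ico] at hν
      show b - (b - ν) = ν
      omega
    · intro ν hν
      simp only [Finset.mem_Ico] at hν
      show ((ν * r ν : ℕ) : ZMod 2) = (((b - (b-ν)) * r (b - (b-ν)) : ℕ) : ZMod 2)
      have h : b - (b - ν) = ν := by omega
      rw [h]
  -- pointwise upper-half values
  have hpt : ∀ ν ∈ Finset.Ico 1 (m'+1),
      (((b - ν) * r (b - ν) : ℕ) : ZMod 2) = 1 + (ν : ZMod 2) + ((r ν : ℕ) : ZMod 2)
        - ((ν * r ν : ℕ) : ZMod 2) := by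
    intro ν hν
    rw [Finset.mem_Ico] at hν
    have h1 : 1 ≤ ν := hν.1
    have h2 : ν ≤ b - 1 := by omega
    have hrν := hrb ν h1 h2
    have hrle : r ν ≤ b := le_of_lt (ZMod.val_lt _)
    have hνle : ν ≤ b := by omega
    rw [hrν]
    push_cast [Nat.cast_sub hνle, Nat.cast_sub hrle, hb1]
    exact zmod2_helper _ _
  -- sum over the half interval of r ν
  have hval_ite : ∀ ν ∈ Finset.Ico 1 (m'+1),
      ((r ν : ℕ) : ZMod 2)
        = (((c * (ν:ZMod b)).valMinAbs.natAbs : ℕ) : ZMod 2)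
          + (if (c * (ν:ZMod b)).val ≤ b/2 then (0 : ZMod 2) else 1) := by
    intro ν hν
    have hv := ZMod.val_eq_ite_valMinAbs (c * (ν:ZMod b))
    have hcast := congrArg (fun z : ℤ => (z : ZMod 2)) hv
    push_cast at hcast
    have hneg : ∀ y : ZMod 2, -y = y := by decide
    have habs : (((c * (ν:ZMod b)).valMinAbs : ℤ) : ZMod 2)
        = (((c * (ν:ZMod b)).valMinAbs.natAbs : ℕ) : ZMod 2) := by
      rcases Int.natAbs_eq ((c * (ν:ZMod b)).valMinAbs) with he | he
      · conv_lhs => rw [he]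
        rw [Int.cast_natCast]
      · conv_lhs => rw [he]
        rw [Int.cast_neg, Int.cast_natCast, hneg]
    rw [hrdef]
    simp only
    rw [hcast, habs]
    congr 1
    split_ifs with hcond
    · norm_num
    · push_cast
      rw [hb1]
  have hmultiset := ZMod.Ico_map_valMinAbs_natAbs_eq_Ico_map_id b c hC
  have hsum1 : ∑ ν ∈ Finset.Ico 1 (m'+1), (((c * (ν:ZMod b)).valMinAbs.natAbs : ℕ) : ZMod 2)
      = ∑ ν ∈ Finset.Ico 1 (m'+1), ((ν : ℕ) : ZMod 2) := by
    have hms2 := congrArg (fun s : Multiset ℕ => (s.map (fun n : ℕ => (n : ZMod 2))).sum) hmultiset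
    simp only [Multiset.map_map, Function.comp] at hms2
    have hsucc : (b/2).succ = m'+1 := by omega
    rw [Finset.sum_eq_multiset_sum, Finset.sum_eq_multiset_sum, ← hsucc]
    exact hms2
  have hsum2 : (∑ ν ∈ Finset.Ico 1 (m'+1), if (c * (ν:ZMod b)).val ≤ b/2 then (0 : ZMod 2) else 1)
      = ((Ncount b C : ℕ) : ZMod 2) := by
    have hsucc : (b/2).succ = m'+1 := by omega
    have hfilter : (Finset.filter (fun x : ℕ => ¬ (c * (x:ZMod b)).val ≤ b/2) (Finset.Ico 1 (m'+1)))
        = Finset.filter (fun x : ℕ => b / 2 < (((C : ZMod b)) * (x : ZMod b)).val)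
            (Finset.Ico 1 (b/2).succ) := by
      rw [hsucc]
      apply Finset.filter_congr
      intro x _
      rw [not_le, hc]
    rw [Finset.sum_ite, Finset.sum_const, Finset.sum_const, smul_zero, zero_add, nsmul_eq_mul,
      mul_one, hfilter, Ncount]
  have hr3 : ∑ ν ∈ Finset.Ico 1 (m'+1), ((r ν : ℕ) : ZMod 2)
      = (∑ ν ∈ Finset.Ico 1 (m'+1), ((ν:ℕ) : ZMod 2)) + ((Ncount b C : ℕ) : ZMod 2) := by
    rw [Finset.sum_congr rfl hval_ite, Finset.sum_add_distrib, hsum1, hsum2]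
  -- put everything together
  rw [hUcast, hsplit, hrefl, Finset.sum_congr rfl hpt]
  have hcomb : (∑ ν ∈ Finset.Ico 1 (m'+1), ((ν * r ν : ℕ) : ZMod 2))
      + (∑ ν ∈ Finset.Ico 1 (m'+1),
          (1 + (ν : ZMod 2) + ((r ν : ℕ) : ZMod 2) - ((ν * r ν : ℕ) : ZMod 2)))
      = ∑ ν ∈ Finset.Ico 1 (m'+1),
          (1 + (ν : ZMod 2) + ((r ν : ℕ) : ZMod 2)) := by
    rw [← Finset.sum_add_distrib]
    apply Finset.sum_congr rfl
    intro ν _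
    ring
  rw [hcomb]
  have hexp2 : ∑ ν ∈ Finset.Ico 1 (m'+1), (1 + (ν : ZMod 2) + ((r ν : ℕ) : ZMod 2))
      = ((m' : ℕ) : ZMod 2) + (∑ ν ∈ Finset.Ico 1 (m'+1), (ν : ZMod 2))
          + ∑ ν ∈ Finset.Ico 1 (m'+1), ((r ν : ℕ) : ZMod 2) := by
    rw [Finset.sum_add_distrib, Finset.sum_add_distrib, Finset.sum_const]
    congr 2
    rw [Nat.card_Ico]
    simp [nsmul_eq_mul]
  rw [hexp2, hr3, hm2]
  have haddself : ∀ y : ZMod 2, y + y = 0 := by decide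
  have : ∀ x y z : ZMod 2, x + y + (y + z) = x + z := by decide
  rw [this]

/-- Full congruence `V ≡ 2bmh + δ·b²  (mod 2b²)` with `(-1)^δ = (t/b)`. -/
lemma V_full {t h : ℕ} {m : ℤ} (hb2 : b ≠ 2)
    (hm : 24 * m = (1 - (t:ℤ)^2) * (1 - (b:ℤ)^2))
    (htodd : Odd t)
    (htb : (((t:ℕ):ℤ) : ZMod b) ≠ 0) (hhb : (((h:ℕ):ℤ) : ZMod b) ≠ 0) :
    ∃ δ : ℕ, ((-1:ℤ))^δ = legendreSym b t ∧
      ((Uval (((h:ℤ) : ZMod b)) : ℤ) - t * (Uval ((((t*h : ℕ):ℤ) : ZMod b)))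
        ≡ 2*b*m*h + δ * (b:ℤ)^2 [ZMOD (2*(b:ℤ)^2)]) := by
  haveI : NeZero b := ⟨hb.out.ne_zero⟩
  have hbodd : Odd b := hb.out.odd_of_ne_two hb2
  have hthb : ((((t*h : ℕ):ℤ)) : ZMod b) ≠ 0 := by
    push_cast
    push_cast at htb hhb
    exact mul_ne_zero htb hhb
  set N1 := Ncount b ((h:ℕ):ℤ) with hN1
  set N2 := Ncount b ((t*h : ℕ):ℤ) with hN2
  refine ⟨N1 + N2, ?_, ?_⟩
  · -- Legendre symbol computation
    have g1 := ZMod.gauss_lemma (p := b) (a := ((h:ℕ):ℤ)) hb2 hhb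
    have g2 := ZMod.gauss_lemma (p := b) (a := ((t*h : ℕ):ℤ)) hb2 hthb
    have : ((-1:ℤ))^(N1+N2) = legendreSym b ((h:ℕ):ℤ) * legendreSym b ((t*h : ℕ):ℤ) := by
      rw [pow_add, g1, g2, hN1, hN2, Ncount, Ncount]
    rw [this, ← legendreSym.mul]
    have harg : ((h:ℕ):ℤ) * ((t*h : ℕ):ℤ) = (t:ℤ) * (((h:ℕ):ℤ) * ((h:ℕ):ℤ)) := by
      push_cast; ring
    rw [harg, legendreSym.mul, legendreSym.mul]
    have hsq : legendreSym b ((h:ℕ):ℤ) * legendreSym b ((h:ℕ):ℤ) = 1 := by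
      have := legendreSym.sq_one b (a := ((h:ℕ):ℤ)) hhb
      nlinarith [this]
    rw [hsq, mul_one]
  · -- the congruence
    have hcop : Nat.Coprime (2:ℤ).natAbs (((b:ℤ)^2).natAbs) := by
      have : ((b:ℤ)^2).natAbs = b^2 := by
        rw [Int.natAbs_pow]
        simp
      rw [this]
      show Nat.Coprime 2 (b^2)
      have : Nat.Coprime 2 b := Nat.coprime_two_left.2 hbodd
      exact this.pow_right 2
    rw [← Int.modEq_and_modEq_iff_modEq_mul hcop]
    constructor
    · -- mod 2
      rw [show ((2:ℤ)) = ((2:ℕ):ℤ) from rfl, ← ZMod.intCast_eq_intCast_iff]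
      have hU1 := U_parity (b := b) hb2 ((h:ℕ):ℤ) hhb
      have hU2 := U_parity (b := b) hb2 ((t*h : ℕ):ℤ) hthb
      have harg1 : ((((h:ℕ):ℤ)) : ZMod b) = ((h:ℕ) : ZMod b) := by push_cast; rfl
      have harg2 : ((((t*h:ℕ):ℤ)) : ZMod b) = ((t:ℕ) : ZMod b) * ((h:ℕ) : ZMod b) := by
        push_cast; rfl
      rw [harg1] at hU1
      rw [harg2] at hU2
      have ht1 : ((t:ℕ) : ZMod 2) = 1 := by
        obtain ⟨k, hk⟩ := htodd
        rw [hk]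
        push_cast
        rw [show ((2:ZMod 2)) = 0 from rfl]
        ring
      have hb1 : ((b:ℕ) : ZMod 2) = 1 := by
        obtain ⟨k, hk⟩ := hbodd
        rw [hk]
        push_cast
        rw [show ((2:ZMod 2)) = 0 from rfl]
        ring
      push_cast
      rw [hU1, hU2, ht1, hb1, hN1, hN2, Ncount, Ncount]
      have key5 : ∀ x y z u v : ZMod 2, x + y - 1 * (x + z) = 2 * 1 * u * v + (y + z) * 1 ^ 2 := by
        decide
      exact key5 _ _ _ _ _
    · -- mod b²
      have := V_modsq (b := b) (t := t) (h := h) hm hbodd htodd htb hhb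
      refine this.trans ?_
      have hd : ((b:ℤ)^2) ∣ ((2*b*m*h + ((N1 + N2 : ℕ)) * (b:ℤ)^2) - 2*b*m*h) := by
        refine ⟨((N1 + N2 : ℕ) : ℤ), by ring⟩
      rw [Int.modEq_iff_dvd]
      exact hd
end


/-- `ω_{h,k} = exp(πi·s(h,k))`. -/
noncomputable def dedekindOmega (h : ℤ) (k : ℕ) : ℂ :=
  Complex.exp (π * I * dedekindSum h k)

/-- The Kloosterman-type sum `K(a,b,t;n) = ∑_{h=1}^{b-1} (ω_{h,b}/ω_{th,b}^t) e^{2πi(at-n)h/b}`. -/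
noncomputable def Ksum (a : ℤ) (b : ℕ) (t : ℕ) (n : ℤ) : ℂ :=
  ∑ h ∈ Finset.Icc 1 (b - 1),
    dedekindOmega (h : ℤ) b / (dedekindOmega ((t : ℤ) * h) b) ^ t
      * Complex.exp (2 * π * I * (a * t - n) * h / b)

lemma neg_one_zpow_inv (k : ℤ) : ((-1:ℂ)^k)⁻¹ = (-1:ℂ)^k := by
  have h : ((-1:ℂ)^k) * ((-1:ℂ)^k) = 1 := by
    rw [← mul_zpow]
    norm_num
  exact inv_eq_of_mul_eq_one_right h

/-- Evaluation of `K(a,b,t;n)` for odd `t`. -/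
theorem Ksum_eval_odd (b : ℕ) [Fact b.Prime] (hb : b ≠ 2) (a n : ℤ) (t : ℕ)
    (ht : 1 < t) (hcop : Nat.Coprime t b) (htodd : Odd t) :
    Ksum a b t n
      = ((if ((1 - (t : ℤ) ^ 2) * (1 - (b : ℤ) ^ 2) / 24 + a * t - n) % b = 0
            then ((b : ℤ) - 1) else -1 : ℤ) : ℂ)
        * (-1 : ℂ) ^ ((1 - (t : ℤ)) * ((b : ℤ) - 1) / 4)
        * (legendreSym b t : ℂ) := by
  have hbp : b.Prime := Fact.out
  have hbodd : Odd b := hbp.odd_of_ne_two hb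
  have hbpos : 0 < b := hbp.pos
  have hbneC : ((b:ℕ):ℂ) ≠ 0 := Nat.cast_ne_zero.2 hbpos.ne'
  haveI : NeZero b := ⟨hbp.ne_zero⟩
  -- the integer m with 24 m = (1-t²)(1-b²)
  have h3 : ¬((3:ℤ) ∣ (t:ℤ) ∧ (3:ℤ) ∣ (b:ℤ)) := by
    rintro ⟨h3t, h3b⟩
    have h3t' : (3:ℕ) ∣ t := by exact_mod_cast h3t
    have h3b' : (3:ℕ) ∣ b := by exact_mod_cast h3b
    have hg : (3:ℕ) ∣ Nat.gcd t b := Nat.dvd_gcd h3t' h3b'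
    rw [hcop] at hg
    omega
  obtain ⟨m, hm⟩ : ∃ m : ℤ, (1 - (t:ℤ)^2) * (1 - (b:ℤ)^2) = 24 * m := dvd24 htodd hbodd h3
  have hm' : 24 * m = (1 - (t:ℤ)^2) * (1 - (b:ℤ)^2) := hm.symm
  have hmdiv : (1 - (t:ℤ)^2) * (1 - (b:ℤ)^2) / 24 = m := by
    rw [hm, Int.mul_ediv_cancel_left _ (by norm_num)]
  -- the integer k with 4 k = (1-t)(b-1)
  obtain ⟨k, hk⟩ : ∃ k : ℤ, (1 - (t:ℤ)) * ((b:ℤ) - 1) = 4 * k := by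
    obtain ⟨u, hu⟩ := htodd
    obtain ⟨v, hv⟩ := hbodd
    refine ⟨(-u) * v, ?_⟩
    have h1 : (t:ℤ) = 2*u+1 := by exact_mod_cast hu
    have h2 : (b:ℤ) = 2*v+1 := by exact_mod_cast hv
    rw [h1, h2]; ring
  have hkdiv : (1 - (t:ℤ)) * ((b:ℤ) - 1) / 4 = k := by
    rw [hk, Int.mul_ediv_cancel_left _ (by norm_num)]
  have htb : (((t:ℕ):ℤ) : ZMod b) ≠ 0 := by
    intro h0
    have h1 : (b:ℤ) ∣ (t:ℤ) := (ZMod.intCast_zmod_eq_zero_iff_dvd _ b).1 h0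
    have h2 : b ∣ t := by exact_mod_cast h1
    exact (hbp.coprime_iff_not_dvd.1 hcop.symm) h2
  set cc : ℤ := m + a * t - n with hcc
  set ζ : ℂ := Complex.exp (2 * (π:ℂ) * I * ((cc:ℤ):ℂ) / b) with hζ
  -- pointwise evaluation of the summand
  have hterm : ∀ h ∈ Finset.Icc 1 (b-1),
      dedekindOmega (h : ℤ) b / (dedekindOmega ((t : ℤ) * h) b) ^ t
          * Complex.exp (2 * π * I * (a * t - n) * h / b)
        = (legendreSym b t : ℂ) * ((-1:ℂ)^k) * ζ^h := by
    intro h hmem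
    rw [Finset.mem_Icc] at hmem
    have hhlt : h < b := by omega
    have hhb : (((h:ℕ):ℤ) : ZMod b) ≠ 0 := by
      intro h0
      have h1 : (b:ℤ) ∣ (h:ℤ) := (ZMod.intCast_zmod_eq_zero_iff_dvd _ b).1 h0
      have h2 : b ∣ h := by exact_mod_cast h1
      have := Nat.le_of_dvd (by omega) h2
      omega
    obtain ⟨δ, hδL, hδcong⟩ := V_full (b := b) (t := t) (h := h) (m := m) hb hm' htodd htb hhb
    -- identify the two forms of U₂
    have hUarg : ((((t*h:ℕ):ℤ)) : ZMod b) = ((((t:ℤ)*(h:ℤ)) : ℤ) : ZMod b) := by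
      push_cast; ring
    rw [hUarg] at hδcong
    obtain ⟨j, hj⟩ := (Int.modEq_iff_dvd).1 hδcong
    -- hj : 2bmh + δb² - V = 2b² j ; so V = 2bmh + δb² + 2b²(-j)
    have hV : ((Uval (((h:ℤ) : ZMod b)) : ℤ) - t * (Uval ((((t:ℤ)*(h:ℤ) : ℤ) : ZMod b))))
        = 2*b*m*h + δ * (b:ℤ)^2 + 2*(b:ℤ)^2 * (-j) := by linarith [hj]
    -- dedekind sum values
    have hC2 : ((((t:ℤ)*(h:ℤ)) : ℤ) : ZMod b) ≠ 0 := by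
      rw [← hUarg]
      push_cast
      push_cast at htb hhb
      exact mul_ne_zero htb hhb
    have hs1 := dedekindSum_eq (b := b) ((h:ℕ):ℤ) hhb
    have hs2 := dedekindSum_eq (b := b) ((t:ℤ)*(h:ℤ)) hC2
    -- assemble
    rw [dedekindOmega, dedekindOmega, hs1, hs2, ← Complex.exp_nat_mul, ← Complex.exp_sub,
      ← Complex.exp_add]
    have hRHS : (legendreSym b t : ℂ) * ((-1:ℂ)^k) * ζ^h
        = Complex.exp ((δ:ℂ)*((π:ℂ)*I) + ((-k:ℤ):ℂ)*((π:ℂ)*I) + (h:ℂ)*(2*(π:ℂ)*I*((cc:ℤ):ℂ)/b)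
            + ((-j:ℤ):ℂ)*(2*(π:ℂ)*I)) := by
      rw [Complex.exp_add, Complex.exp_add, Complex.exp_add]
      rw [Complex.exp_int_mul_two_pi_mul_I, mul_one]
      have e1 : Complex.exp ((δ:ℂ)*((π:ℂ)*I)) = (-1:ℂ)^δ := by
        rw [Complex.exp_nat_mul, Complex.exp_pi_mul_I]
      have e2 : Complex.exp (((-k:ℤ):ℂ)*((π:ℂ)*I)) = (-1:ℂ)^k := by
        rw [Complex.exp_int_mul, Complex.exp_pi_mul_I, zpow_neg, neg_one_zpow_inv]
      have e3 : Complex.exp ((h:ℂ)*(2*(π:ℂ)*I*((cc:ℤ):ℂ)/b)) = ζ^h := by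
        rw [Complex.exp_nat_mul, hζ]
      have eL : (legendreSym b t : ℂ) = (-1:ℂ)^δ := by
        rw [← hδL]
        push_cast
        ring
      rw [e1, e2, e3, eL]
    rw [hRHS]
    congr 1
    -- exponent identity
    have hVC : ((Uval (((h:ℤ) : ZMod b)) : ℂ)) - (t:ℂ) * ((Uval ((((t:ℤ)*(h:ℤ) : ℤ) : ZMod b)) : ℂ))
        = 2*(b:ℂ)*(m:ℂ)*(h:ℂ) + (δ:ℂ)*(b:ℂ)^2 + 2*(b:ℂ)^2*((-j:ℤ):ℂ) := by
      exact_mod_cast congrArg (fun z : ℤ => (z:ℂ)) hV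
    have hkC : (1 - (t:ℂ)) * ((b:ℂ) - 1) = 4*(k:ℂ) := by exact_mod_cast hk
    have hccC : ((cc:ℤ):ℂ) = (m:ℂ) + (a:ℂ)*(t:ℂ) - (n:ℂ) := by
      rw [hcc]; push_cast; ring
    push_cast
    push_cast at hVC
    rw [hccC]
    field_simp
    linear_combination 4 * hVC - (((b:ℕ):ℂ)^2) * hkC
  -- sum up
  rw [Ksum, Finset.sum_congr rfl hterm, ← Finset.mul_sum]
  -- geometric sum
  have hgeom : (∑ h ∈ Finset.Icc 1 (b-1), ζ^h) = (if (b:ℤ) ∣ cc then ((b:ℂ) - 1) else -1) := by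
    have hIcc : Finset.Icc 1 (b-1) = Finset.Ico 1 b := by
      rw [← Finset.Ico_add_one_right_eq_Icc]; congr 1; omega
    by_cases hdvd : (b:ℤ) ∣ cc
    · obtain ⟨q, hq⟩ := hdvd
      have hζ1 : ζ = 1 := by
        rw [hζ, hq]
        have e : 2*(π:ℂ)*I*(((b:ℤ)*q:ℤ):ℂ)/b = (q:ℂ) * (2*(π:ℂ)*I) := by
          push_cast
          field_simp
        rw [e, Complex.exp_int_mul_two_pi_mul_I]
      rw [if_pos ⟨q, hq⟩]
      simp only [hζ1, one_pow, Finset.sum_const, Nat.card_Icc, nsmul_eq_mul, mul_one]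
      push_cast [Nat.cast_sub (by omega : 1 ≤ b - 1 + 1 - 1 + 1)]
      rw [Nat.cast_sub (by omega : 1 ≤ b)]
      norm_num
    · rw [if_neg hdvd]
      have hζb : ζ^b = 1 := by
        rw [hζ, ← Complex.exp_nat_mul]
        have e : (b:ℂ) * (2*(π:ℂ)*I*((cc:ℤ):ℂ)/b) = (cc:ℂ) * (2*(π:ℂ)*I) := by
          field_simp
        rw [e, Complex.exp_int_mul_two_pi_mul_I]
      have hζne : ζ ≠ 1 := by
        intro h1
        rw [hζ] at h1
        obtain ⟨n', hn'⟩ := Complex.exp_eq_one_iff.1 h1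
        apply hdvd
        refine ⟨n', ?_⟩
        have hπ : ((π:ℂ)) ≠ 0 := by exact_mod_cast Real.pi_ne_zero
        have hI : Complex.I ≠ 0 := Complex.I_ne_zero
        have h2πI : (2*(π:ℂ)*Complex.I) ≠ 0 := by
          simp [hπ, hI]
        have : ((cc:ℤ):ℂ) = (b:ℂ) * (n':ℂ) := by
          apply mul_left_cancel₀ h2πI
          field_simp at hn'
          linear_combination (2*(π:ℂ)*Complex.I) * hn'
        exact_mod_cast this
      have hsum0 : ∑ h ∈ Finset.range b, ζ^h = 0 := by
        rw [geom_sum_eq hζne, hζb]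
        simp
      have hsplit : ∑ h ∈ Finset.range b, ζ^h = 1 + ∑ h ∈ Finset.Icc 1 (b-1), ζ^h := by
        rw [Finset.range_eq_Ico, Finset.sum_eq_sum_Ico_succ_bot hbpos, pow_zero, hIcc]
      have : ∑ h ∈ Finset.Icc 1 (b-1), ζ^h = -1 := by
        rw [hsplit] at hsum0
        linear_combination hsum0
      exact this
  rw [hgeom, hmdiv, hkdiv]
  have hcond : ((m + a * t - n) % (b:ℤ) = 0) ↔ ((b:ℤ) ∣ cc) := by
    rw [hcc]
    constructor
    · intro h0
      exact Int.dvd_of_emod_eq_zero h0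
    · intro h0
      exact Int.emod_eq_zero_of_dvd h0
  by_cases hdvd : (b:ℤ) ∣ cc
  · rw [if_pos hdvd, if_pos (hcond.2 hdvd)]
    push_cast
    ring
  · rw [if_neg hdvd, if_neg (fun h0 => hdvd (hcond.1 h0))]
    push_cast
    ring
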